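/- arXiv:2304.04191 — 3 statements merged into one kernel-verified Lean document; each statement's English description precedes it below -/
import Mathlib

section
/- Let n ≥ 2 and d ≥ 2, let f be a homogeneous real polynomial of degree d in the variables x_1,…,x_n, and let x ∈ ℝ^n be a point with f(x) > 0. Then the following are equivalent: (1) the Hessian at x of the function y ↦ f(y)^{1/d} (defined on the open set where f > 0) is negative semidefinite; (2) the Hessian at x of the function y ↦ log f(y) is negative semidefinite; (3) the Hessian matrix H_f(x) = [∂_i∂_j f(x)]_{i,j=1}^n has exactly one positive eigenvalue (counted with multiplicity). -/
open MvPolynomial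
open scoped Matrix

namespace LorentzianPaper

variable {n : ℕ}

lemma my_pderiv_comm (i j : Fin n) (f : MvPolynomial (Fin n) ℝ) :
    pderiv i (pderiv j f) = pderiv j (pderiv i f) := by
  induction f using MvPolynomial.induction_on with
  | C a => simp
  | add p q hp hq => simp [hp, hq]
  | mul_X p k hp =>
    simp only [pderiv_mul, map_add, pderiv_mul, hp]
    have h1 : pderiv i (pderiv j (X k : MvPolynomial (Fin n) ℝ)) = 0 := by
      rw [pderiv_X]; rcases eq_or_ne j k with h | h <;> simp [Pi.single_apply, h]
    have h2 : pderiv j (pderiv i (X k : MvPolynomial (Fin n) ℝ)) = 0 := by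
      rw [pderiv_X]; rcases eq_or_ne i k with h | h <;> simp [Pi.single_apply, h]
    rw [h1, h2]; ring

lemma X_mul_pderiv_monomial (i : Fin n) (s : Fin n →₀ ℕ) (a : ℝ) :
    X i * pderiv i (monomial s a) = monomial s (a * s i) := by
  rw [pderiv_monomial, X, monomial_mul]
  rcases Nat.eq_zero_or_pos (s i) with h | h
  · simp [h]
  · have hs : (Finsupp.single i 1 + (s - Finsupp.single i 1)) = s := by
      rw [add_comm]
      exact tsub_add_cancel_of_le (Finsupp.single_le_iff.mpr h)
    rw [show ((fun₀ | i => 1) + (s - fun₀ | i => 1)) = s from hs, one_mul]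

lemma degree_sum_of_mem (d : ℕ) {f : MvPolynomial (Fin n) ℝ} (hf : f.IsHomogeneous d)
    {s : Fin n →₀ ℕ} (hs : coeff s f ≠ 0) : ∑ i : Fin n, s i = d := by
  have := hf hs
  simp [Finsupp.weight, Finsupp.linearCombination, Finsupp.sum] at this
  rw [← this]
  exact (Finsupp.sum_fintype s (fun _ e => e) (fun _ => rfl)).symm ▸ rfl

lemma euler_poly (d : ℕ) (f : MvPolynomial (Fin n) ℝ) (hf : f.IsHomogeneous d) :
    ∑ i : Fin n, X i * pderiv i f = (d : ℝ) • f := by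
  conv_lhs => rw [f.as_sum]
  simp_rw [map_sum, Finset.mul_sum]
  rw [Finset.sum_comm]
  conv_rhs => rw [f.as_sum]
  rw [Finset.smul_sum]
  refine Finset.sum_congr rfl fun s hs => ?_
  have hdeg : ∑ i : Fin n, s i = d := degree_sum_of_mem d hf (MvPolynomial.mem_support_iff.mp hs)
  calc ∑ i : Fin n, X i * pderiv i (monomial s (coeff s f))
      = ∑ i : Fin n, monomial s (coeff s f * s i) := by simp_rw [X_mul_pderiv_monomial]
    _ = monomial s (coeff s f * d) := by
        rw [← map_sum, ← Finset.mul_sum]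
        norm_cast
        rw [hdeg]
    _ = (d : ℝ) • monomial s (coeff s f) := by
        rw [smul_monomial, mul_comm]
        norm_cast
        rw [nsmul_eq_mul]

lemma euler_eval (d : ℕ) (f : MvPolynomial (Fin n) ℝ) (hf : f.IsHomogeneous d) (y : Fin n → ℝ) :
    ∑ i : Fin n, y i * eval y (pderiv i f) = (d : ℝ) * eval y f := by
  have := congrArg (eval y) (euler_poly d f hf)
  simpa [eval_sum] using this

lemma degree_eq_sum (s : Fin n →₀ ℕ) : s.degree = ∑ i : Fin n, s i := by
  rw [Finsupp.degree]
  exact Finset.sum_subset (Finset.subset_univ _) (fun i _ hi => by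
    simpa using Finsupp.notMem_support_iff.mp hi)

lemma pderiv_isHomogeneous {d : ℕ} {f : MvPolynomial (Fin n) ℝ} (hf : f.IsHomogeneous d)
    (i : Fin n) : (pderiv i f).IsHomogeneous (d - 1) := by
  conv_lhs => rw [f.as_sum]
  rw [map_sum]
  refine IsHomogeneous.sum _ _ _ fun s hs => ?_
  rw [pderiv_monomial]
  rcases Nat.eq_zero_or_pos (s i) with h | h
  · simp [h]
    exact isHomogeneous_zero _ _ _
  · refine isHomogeneous_monomial _ ?_
    have hd : ∑ j : Fin n, s j = d :=
      degree_sum_of_mem d hf (MvPolynomial.mem_support_iff.mp hs)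
    rw [degree_eq_sum]
    have key : ∀ j : Fin n, ((s - Finsupp.single i 1) : Fin n →₀ ℕ) j
        = if j = i then s i - 1 else s j := by
      intro j
      rw [Finsupp.tsub_apply, Finsupp.single_apply]
      by_cases hji : j = i
      · subst hji; simp
      · rw [if_neg (fun h' => hji h'.symm), if_neg hji]; simp
    have e1 : ∑ j : Fin n, ((s - Finsupp.single i 1) : Fin n →₀ ℕ) j
        = (∑ j ∈ Finset.univ.erase i, s j) + (s i - 1) := by
      rw [← Finset.sum_erase_add _ _ (Finset.mem_univ i), key]
      rw [if_pos rfl]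
      congr 1
      refine Finset.sum_congr rfl fun j hj => ?_
      rw [key, if_neg (Finset.ne_of_mem_erase hj)]
    have e2 : (∑ j ∈ Finset.univ.erase i, s j) + s i = ∑ j : Fin n, s j :=
      Finset.sum_erase_add _ _ (Finset.mem_univ i)
    rw [e1]
    omega


noncomputable def gradCLM (f : MvPolynomial (Fin n) ℝ) (y : Fin n → ℝ) :
    (Fin n → ℝ) →L[ℝ] ℝ :=
  ∑ i : Fin n, eval y (pderiv i f) • (ContinuousLinearMap.proj i : ((Fin n → ℝ) →L[ℝ] ℝ))

lemma gradCLM_apply (f : MvPolynomial (Fin n) ℝ) (y v : Fin n → ℝ) :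
    gradCLM f y v = ∑ i : Fin n, eval y (pderiv i f) * v i := by
  simp [gradCLM, ContinuousLinearMap.sum_apply]

lemma hasFDerivAt_eval (f : MvPolynomial (Fin n) ℝ) (y : Fin n → ℝ) :
    HasFDerivAt (fun z => eval z f) (gradCLM f y) y := by
  induction f using MvPolynomial.induction_on with
  | C a =>
    have : gradCLM (C a : MvPolynomial (Fin n) ℝ) y = 0 := by
      simp [gradCLM]
    rw [this]
    simpa using hasFDerivAt_const (a : ℝ) y
  | add p q hp hq =>
    have : gradCLM (p + q) y = gradCLM p y + gradCLM q y := by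
      simp [gradCLM, add_smul, Finset.sum_add_distrib]
    rw [this]
    simpa using hp.fun_add hq
  | mul_X p k hp =>
    have hXk : HasFDerivAt (fun z : Fin n → ℝ => z k)
        (ContinuousLinearMap.proj k : ((Fin n → ℝ) →L[ℝ] ℝ)) y := by
      exact (ContinuousLinearMap.proj k : ((Fin n → ℝ) →L[ℝ] ℝ)).hasFDerivAt
    have := hp.mul hXk
    have hsingle : ∀ i : Fin n, eval y ((Pi.single i (1:MvPolynomial (Fin n) ℝ)
        : Fin n → MvPolynomial (Fin n) ℝ) k)
        = if k = i then 1 else 0 := fun i => by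
      rcases eq_or_ne k i with h | h <;> simp [Pi.single_apply, h, eq_comm]
    have heq : gradCLM (p * X k) y
        = eval y p • (ContinuousLinearMap.proj k : ((Fin n → ℝ) →L[ℝ] ℝ)) + y k • gradCLM p y := by
      ext v
      simp only [ContinuousLinearMap.add_apply, ContinuousLinearMap.smul_apply,
        gradCLM_apply, smul_eq_mul, ContinuousLinearMap.proj_apply]
      calc ∑ i : Fin n, eval y (pderiv i (p * X k)) * v i
          = ∑ i : Fin n, (eval y (pderiv i p) * y k * v i
              + (if k = i then eval y p * v i else 0)) := by
            refine Finset.sum_congr rfl fun i _ => ?_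
            rw [pderiv_mul, pderiv_X, eval_add, eval_mul, eval_mul, eval_X, hsingle i]
            split_ifs <;> ring
        _ = eval y p * v k + y k * ∑ i : Fin n, eval y (pderiv i p) * v i := by
            rw [Finset.sum_add_distrib, Finset.sum_ite_eq, if_pos (Finset.mem_univ k),
              Finset.mul_sum, add_comm]
            congr 1
            exact Finset.sum_congr rfl fun i _ => by ring
    rw [heq]
    have hfun : (fun z : Fin n → ℝ => eval z (p * X k)) = fun z => eval z p * z k := by
      funext z; simp
    rw [hfun]
    exact this

lemma second_dir (f : MvPolynomial (Fin n) ℝ) (x : Fin n → ℝ) (hx : 0 < eval x f)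
    (g : (Fin n → ℝ) → ℝ) (ψ ψ' : ℝ → ℝ)
    (hg : ∀ y : Fin n → ℝ, 0 < eval y f → fderiv ℝ g y = ψ (eval y f) • gradCLM f y)
    (hψ : HasDerivAt ψ (ψ' (eval x f)) (eval x f)) (v : Fin n → ℝ) :
    fderiv ℝ (fun y => fderiv ℝ g y v) x v
      = ψ' (eval x f) * gradCLM f x v * gradCLM f x v
        + ψ (eval x f) * ∑ i : Fin n, v i * gradCLM (pderiv i f) x v := by
  have hFcont : Continuous fun y : Fin n → ℝ => eval y f :=
    continuous_iff_continuousAt.mpr fun y => (hasFDerivAt_eval f y).continuousAt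
  have hU : IsOpen {y : Fin n → ℝ | 0 < eval y f} := isOpen_lt continuous_const hFcont
  have hev : (fun y => fderiv ℝ g y v) =ᶠ[nhds x]
      (fun y => ψ (eval y f) * gradCLM f y v) := by
    filter_upwards [hU.mem_nhds hx] with y hy
    rw [hg y hy]
    simp
  have hh : HasFDerivAt (fun y : Fin n → ℝ => ∑ i : Fin n, eval y (pderiv i f) * v i)
      (∑ i : Fin n, v i • gradCLM (pderiv i f) x) x :=
    HasFDerivAt.fun_sum fun i _ => (hasFDerivAt_eval (pderiv i f) x).mul_const (v i)
  have hψF : HasFDerivAt (fun y : Fin n → ℝ => ψ (eval y f))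
      (ψ' (eval x f) • gradCLM f x) x :=
    hψ.comp_hasFDerivAt x (hasFDerivAt_eval f x)
  have hprod : HasFDerivAt (fun y : Fin n → ℝ => ψ (eval y f) * gradCLM f y v)
      (ψ (eval x f) • (∑ i : Fin n, v i • gradCLM (pderiv i f) x)
        + gradCLM f x v • (ψ' (eval x f) • gradCLM f x)) x := by
    have : (fun y : Fin n → ℝ => gradCLM f y v)
        = fun y : Fin n → ℝ => ∑ i : Fin n, eval y (pderiv i f) * v i := by
      funext y; exact gradCLM_apply f y v
    have hh2 : HasFDerivAt (fun y : Fin n → ℝ => gradCLM f y v)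
        (∑ i : Fin n, v i • gradCLM (pderiv i f) x) x := by rw [this]; exact hh
    exact hψF.mul hh2
  rw [hev.fderiv_eq, hprod.fderiv]
  simp only [ContinuousLinearMap.add_apply, ContinuousLinearMap.smul_apply,
    ContinuousLinearMap.sum_apply, smul_eq_mul]
  ring


lemma spectral_expand (M : Matrix (Fin n) (Fin n) ℝ) (hM : M.IsHermitian) (v : Fin n → ℝ) :
    v ⬝ᵥ M *ᵥ v = ∑ i, hM.eigenvalues i *
      ((((hM.eigenvectorUnitary : Matrix (Fin n) (Fin n) ℝ))ᵀ *ᵥ v) i)^2 := by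
  set U : Matrix (Fin n) (Fin n) ℝ := (hM.eigenvectorUnitary : Matrix (Fin n) (Fin n) ℝ) with hUdef
  have hstar : star U = Uᵀ := Matrix.conjTranspose_eq_transpose_of_trivial U
  nth_rewrite 1 [hM.spectral_theorem]
  set w := Uᵀ *ᵥ v with hw
  change v ⬝ᵥ (U * Matrix.diagonal (RCLike.ofReal ∘ hM.eigenvalues) * star U) *ᵥ v = _
  rw [hstar]
  have h3 : (RCLike.ofReal ∘ hM.eigenvalues : Fin n → ℝ) = hM.eigenvalues := by
    funext i; simp [RCLike.ofReal]
  rw [h3]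
  rw [← Matrix.mulVec_mulVec, ← Matrix.mulVec_mulVec, Matrix.dotProduct_mulVec]
  have h2 : Matrix.vecMul v U = w := by
    rw [hw]
    exact (Matrix.mulVec_transpose U v).symm
  rw [h2, ← hw]
  rw [dotProduct]
  refine Finset.sum_congr rfl fun i _ => ?_
  rw [Matrix.mulVec_diagonal]
  ring


lemma dp_symm (M : Matrix (Fin n) (Fin n) ℝ) (hM : M.IsHermitian) (a b : Fin n → ℝ) :
    a ⬝ᵥ M *ᵥ b = b ⬝ᵥ M *ᵥ a := by
  have hT : Mᵀ = M := by
    have := hM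
    rwa [Matrix.IsHermitian, Matrix.conjTranspose_eq_transpose_of_trivial] at this
  simp only [dotProduct, Matrix.mulVec, dotProduct, Finset.mul_sum]
  rw [Finset.sum_comm]
  refine Finset.sum_congr rfl fun i _ => Finset.sum_congr rfl fun j _ => ?_
  have : M j i = M i j := by
    calc M j i = Mᵀ i j := rfl
    _ = M i j := by rw [hT]
  rw [this]; ring

lemma q_expand (M : Matrix (Fin n) (Fin n) ℝ) (hM : M.IsHermitian) (a b : Fin n → ℝ) (s : ℝ) :
    (a + s • b) ⬝ᵥ M *ᵥ (a + s • b)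
      = a ⬝ᵥ M *ᵥ a + 2 * s * (b ⬝ᵥ M *ᵥ a) + s^2 * (b ⬝ᵥ M *ᵥ b) := by
  rw [Matrix.mulVec_add, Matrix.mulVec_smul, add_dotProduct, smul_dotProduct,
    dotProduct_add, dotProduct_add, dotProduct_smul, dotProduct_smul]
  rw [dp_symm M hM a b]
  simp only [smul_eq_mul]
  ring

lemma L0 (M : Matrix (Fin n) (Fin n) ℝ) (hM : M.IsHermitian) (x : Fin n → ℝ)
    (hE : 0 < x ⬝ᵥ M *ᵥ x) (ψ : (Fin n → ℝ) →ₗ[ℝ] ℝ) (c : ℝ)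
    (hb : ∀ v, v ⬝ᵥ M *ᵥ v ≤ c * (ψ v)^2) (v : Fin n → ℝ) :
    (v ⬝ᵥ M *ᵥ v) * (x ⬝ᵥ M *ᵥ x) ≤ (x ⬝ᵥ M *ᵥ v)^2 := by
  set E := x ⬝ᵥ M *ᵥ x with hEdef
  have hψx : ψ x ≠ 0 := by
    intro h
    have := hb x
    rw [h] at this
    simp at this
    linarith
  set t := (x ⬝ᵥ M *ᵥ v) / E with ht
  set w := v + (-t) • x with hwdef
  have hBxw : x ⬝ᵥ M *ᵥ w = 0 := by
    rw [hwdef, Matrix.mulVec_add, Matrix.mulVec_smul, dotProduct_add,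
      dotProduct_smul]
    simp only [smul_eq_mul]
    rw [ht]
    field_simp
    rw [← hEdef]; ring
  -- q w ≤ 0
  have hqw : w ⬝ᵥ M *ᵥ w ≤ 0 := by
    set s := -(ψ w / ψ x) with hs
    have hψw' : ψ (w + s • x) = 0 := by
      rw [map_add, map_smul, hs]
      rw [smul_eq_mul, neg_mul, div_mul_cancel₀ _ hψx, add_neg_cancel]
    have h1 : (w + s • x) ⬝ᵥ M *ᵥ (w + s • x) ≤ 0 := by
      have := hb (w + s • x)
      rw [hψw'] at this
      simpa using this
    rw [q_expand M hM w x s] at h1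
    rw [hBxw] at h1
    nlinarith [sq_nonneg s, hE]
  -- expand q v
  have hv : v = w + t • x := by
    rw [hwdef, add_assoc, ← add_smul]
    simp
  have hqv : v ⬝ᵥ M *ᵥ v = w ⬝ᵥ M *ᵥ w + t^2 * E := by
    conv_lhs => rw [hv]
    rw [q_expand M hM w x t, hBxw, hEdef]
    ring
  have htE : t^2 * E * E = (x ⬝ᵥ M *ᵥ v)^2 := by
    rw [ht]
    field_simp
  nlinarith [hqw, hE]

lemma posEig_nonempty (M : Matrix (Fin n) (Fin n) ℝ) (hM : M.IsHermitian) (x : Fin n → ℝ)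
    (hE : 0 < x ⬝ᵥ M *ᵥ x) : {i | 0 < hM.eigenvalues i}.Nonempty := by
  by_contra h
  rw [Set.not_nonempty_iff_eq_empty] at h
  have hall : ∀ i, hM.eigenvalues i ≤ 0 := by
    intro i
    by_contra hi
    exact Set.eq_empty_iff_forall_notMem.mp h i (by simpa using lt_of_not_ge hi)
  have : x ⬝ᵥ M *ᵥ x ≤ 0 := by
    rw [spectral_expand M hM x]
    refine Finset.sum_nonpos fun i _ => ?_
    exact mul_nonpos_of_nonpos_of_nonneg (hall i) (sq_nonneg _)
  linarith

lemma col_fact (M : Matrix (Fin n) (Fin n) ℝ) (hM : M.IsHermitian) (k : Fin n) :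
    ((hM.eigenvectorUnitary : Matrix (Fin n) (Fin n) ℝ))ᵀ *ᵥ
      (fun j => (hM.eigenvectorUnitary : Matrix (Fin n) (Fin n) ℝ) j k)
      = fun i => if i = k then 1 else 0 := by
  set U : Matrix (Fin n) (Fin n) ℝ := (hM.eigenvectorUnitary : Matrix (Fin n) (Fin n) ℝ)
  have h1 : Uᵀ * U = 1 := by
    have := Matrix.UnitaryGroup.star_mul_self hM.eigenvectorUnitary
    rwa [Matrix.star_eq_conjTranspose, Matrix.conjTranspose_eq_transpose_of_trivial] at this
  funext i
  have : (Uᵀ *ᵥ fun j => U j k) i = (Uᵀ * U) i k := by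
    simp [Matrix.mulVec, Matrix.mul_apply, dotProduct]
  rw [this, h1, Matrix.one_apply]

lemma atMostOne (M : Matrix (Fin n) (Fin n) ℝ) (hM : M.IsHermitian)
    (ψ : (Fin n → ℝ) →ₗ[ℝ] ℝ) (c : ℝ)
    (hb : ∀ v, v ⬝ᵥ M *ᵥ v ≤ c * (ψ v)^2) :
    {i | 0 < hM.eigenvalues i}.ncard ≤ 1 := by
  set U : Matrix (Fin n) (Fin n) ℝ := (hM.eigenvectorUnitary : Matrix (Fin n) (Fin n) ℝ) with hU
  rw [Set.ncard_le_one_iff_eq]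
  by_contra hcon
  push_neg at hcon
  obtain ⟨hne, hns⟩ := hcon
  -- get two distinct elements
  obtain ⟨k, hk⟩ := hne
  have : ¬ ∀ l ∈ {i | 0 < hM.eigenvalues i}, l = k := by
    intro hall
    exact hns k (Set.eq_singleton_iff_unique_mem.mpr ⟨hk, hall⟩)
  push_neg at this
  obtain ⟨l, hl, hlk⟩ := this
  have hlamk : 0 < hM.eigenvalues k := hk
  have hlaml : 0 < hM.eigenvalues l := hl
  set a : Fin n → ℝ := fun j => U j k with ha
  set b : Fin n → ℝ := fun j => U j l with hb2
  obtain ⟨α, β, hψ0, hne2⟩ : ∃ α β : ℝ, α * ψ a + β * ψ b = 0 ∧ (α ≠ 0 ∨ β ≠ 0) := by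
    rcases eq_or_ne (ψ a) 0 with h | h
    · exact ⟨1, 0, by rw [h]; ring, Or.inl one_ne_zero⟩
    · exact ⟨ψ b, -ψ a, by ring, Or.inr (neg_ne_zero.mpr h)⟩
  set v := α • a + β • b with hv
  have hψv : ψ v = 0 := by
    rw [hv, map_add, map_smul, map_smul]
    simpa using hψ0
  have hwv : Uᵀ *ᵥ v = fun i => α * (if i = k then 1 else 0) + β * (if i = l then 1 else 0) := by
    rw [hv, Matrix.mulVec_add, Matrix.mulVec_smul, Matrix.mulVec_smul,
      col_fact M hM k, col_fact M hM l]
    rfl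
  have hqv : v ⬝ᵥ M *ᵥ v
      = hM.eigenvalues k * α^2 + hM.eigenvalues l * β^2 := by
    rw [spectral_expand M hM v, hwv]
    rw [← Finset.sum_subset (Finset.subset_univ ({k, l} : Finset (Fin n)))
      (fun i _ hi => by
        simp only [Finset.mem_insert, Finset.mem_singleton] at hi
        push_neg at hi
        simp only []
        rw [if_neg hi.1, if_neg hi.2]
        ring)]
    rw [Finset.sum_pair (Ne.symm hlk)]
    simp only [if_true, if_neg hlk, if_neg (Ne.symm hlk)]
    ring
  have hqv0 : v ⬝ᵥ M *ᵥ v ≤ 0 := by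
    have := hb v
    rw [hψv] at this
    simpa using this
  rw [hqv] at hqv0
  rcases hne2 with h | h
  · nlinarith [sq_nonneg α, sq_nonneg β, pow_pos (abs_pos.mpr h) 2, sq_abs α]
  · nlinarith [sq_nonneg α, sq_nonneg β, pow_pos (abs_pos.mpr h) 2, sq_abs β]

lemma onePos_bound (M : Matrix (Fin n) (Fin n) ℝ) (hM : M.IsHermitian)
    (hcount : {i | 0 < hM.eigenvalues i}.ncard ≤ 1) (x : Fin n → ℝ)
    (hE : 0 < x ⬝ᵥ M *ᵥ x) (v : Fin n → ℝ) :
    (v ⬝ᵥ M *ᵥ v) * (x ⬝ᵥ M *ᵥ x) ≤ (x ⬝ᵥ M *ᵥ v)^2 := by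
  obtain ⟨k, hk⟩ : ∃ k, {i | 0 < hM.eigenvalues i} = {k} := by
    rcases (Set.ncard_le_one_iff_eq (Set.toFinite _)).mp hcount with h | h
    · exact absurd h (Set.nonempty_iff_ne_empty.mp (posEig_nonempty M hM x hE))
    · exact h
  set U : Matrix (Fin n) (Fin n) ℝ := (hM.eigenvectorUnitary : Matrix (Fin n) (Fin n) ℝ) with hU
  set ψ : (Fin n → ℝ) →ₗ[ℝ] ℝ := (LinearMap.proj k) ∘ₗ Matrix.mulVecLin Uᵀ with hψ
  have hψap : ∀ w, ψ w = (Uᵀ *ᵥ w) k := fun w => rfl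
  have hb : ∀ w, w ⬝ᵥ M *ᵥ w ≤ hM.eigenvalues k * (ψ w)^2 := by
    intro w
    rw [spectral_expand M hM w]
    calc ∑ i, hM.eigenvalues i * ((Uᵀ *ᵥ w) i)^2
        ≤ ∑ i, (if i = k then hM.eigenvalues i * ((Uᵀ *ᵥ w) i)^2 else 0) := by
          refine Finset.sum_le_sum fun i _ => ?_
          by_cases hik : i = k
          · rw [if_pos hik]
          · rw [if_neg hik]
            have hile : hM.eigenvalues i ≤ 0 := by
              by_contra hpos
              have : i ∈ {j | 0 < hM.eigenvalues j} := lt_of_not_ge hpos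
              rw [hk] at this
              exact hik this
            exact mul_nonpos_of_nonpos_of_nonneg hile (sq_nonneg _)
      _ = hM.eigenvalues k * (ψ w)^2 := by
          rw [Finset.sum_ite_eq' Finset.univ k, if_pos (Finset.mem_univ k), hψap]
  exact L0 M hM x hE ψ (hM.eigenvalues k) hb v


/-- Hessian matrix of a multivariate polynomial `f` at a point `x`. -/
noncomputable def hess {n : ℕ} (f : MvPolynomial (Fin n) ℝ) (x : Fin n → ℝ) :
    Matrix (Fin n) (Fin n) ℝ :=
  Matrix.of fun i j => eval x (pderiv i (pderiv j f))

/-- Number of positive eigenvalues (with multiplicity) of a real symmetric matrix. -/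
noncomputable def posEigCount {n : ℕ} (M : Matrix (Fin n) (Fin n) ℝ) : ℕ :=
  if h : M.IsHermitian then {i | 0 < h.eigenvalues i}.ncard else 0

/-- A function `g : ℝ^n → ℝ` has negative semidefinite Hessian (second derivative) at `x`. -/
def HessNegSemidef {n : ℕ} (g : (Fin n → ℝ) → ℝ) (x : Fin n → ℝ) : Prop :=
  ∀ v : Fin n → ℝ, fderiv ℝ (fun y => fderiv ℝ g y v) x v ≤ 0

lemma aux_mul_nonpos_iff_pos {a b : ℝ} (ha : 0 < a) : a * b ≤ 0 ↔ b ≤ 0 := by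
  constructor
  · intro h
    by_contra hb
    push_neg at hb
    nlinarith
  · intro h
    exact mul_nonpos_of_nonneg_of_nonpos ha.le h

/-- For a homogeneous polynomial `f` of degree `d ≥ 2` in `n ≥ 2` variables
and a point `x` with `f(x) > 0`, the following are equivalent: (1) the Hessian of `f^{1/d}`
at `x` is negative semidefinite; (2) the Hessian of `log f` at `x` is negative semidefinite;
(3) the Hessian matrix of `f` at `x` has exactly one positive eigenvalue. -/
theorem statement0 (n d : ℕ) (hn : 2 ≤ n) (hd : 2 ≤ d)
    (f : MvPolynomial (Fin n) ℝ) (hf : f.IsHomogeneous d)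
    (x : Fin n → ℝ) (hx : 0 < eval x f) :
    (HessNegSemidef (fun y => (eval y f) ^ ((d : ℝ)⁻¹)) x ↔
      HessNegSemidef (fun y => Real.log (eval y f)) x) ∧
    (HessNegSemidef (fun y => Real.log (eval y f)) x ↔
      posEigCount (hess f x) = 1) := by
  classical
  set F : ℝ := eval x f with hF
  set c : ℝ := (d : ℝ)⁻¹ with hc
  have hd2 : (2:ℝ) ≤ (d:ℝ) := by exact_mod_cast hd
  have hdpos : (0:ℝ) < (d:ℝ) := by linarith
  have hcpos : 0 < c := by rw [hc]; positivity
  have hcle : c ≤ 1 := by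
    rw [hc]
    rw [inv_le_one_iff₀]
    right; linarith
  set M : Matrix (Fin n) (Fin n) ℝ := hess f x with hM
  set D : (Fin n → ℝ) → ℝ := fun v => gradCLM f x v with hD
  set Q : (Fin n → ℝ) → ℝ := fun v => ∑ i : Fin n, v i * gradCLM (pderiv i f) x v with hQ
  -- symmetry of second partials at x
  have hcomm : ∀ i j : Fin n, eval x (pderiv i (pderiv j f)) = eval x (pderiv j (pderiv i f)) :=
    fun i j => by rw [my_pderiv_comm]
  have hMsym : M.IsHermitian := by
    rw [hM]
    show (hess f x)ᴴ = hess f x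
    ext i j
    simp only [Matrix.conjTranspose_apply, hess, Matrix.of_apply, star_trivial]
    exact hcomm j i
  -- Q as matrix quadratic form
  have hQmat : ∀ v, Q v = v ⬝ᵥ M *ᵥ v := by
    intro v
    rw [hQ, hM]
    simp only []
    rw [dotProduct]
    refine Finset.sum_congr rfl fun i _ => ?_
    rw [Matrix.mulVec]
    congr 1
    rw [dotProduct, gradCLM_apply]
    refine Finset.sum_congr rfl fun j _ => ?_
    show eval x (pderiv j (pderiv i f)) * v j = hess f x i j * v j
    rw [show hess f x i j = eval x (pderiv i (pderiv j f)) from rfl, hcomm i j]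
  -- Euler identities
  have hcast : ((d - 1 : ℕ) : ℝ) = (d:ℝ) - 1 := by
    have h1 : (1:ℕ) ≤ d := by omega
    rw [Nat.cast_sub h1, Nat.cast_one]
  have hMx : ∀ i, (M *ᵥ x) i = ((d:ℝ) - 1) * eval x (pderiv i f) := by
    intro i
    rw [hM]
    show (∑ j, hess f x i j * x j) = _
    have : ∀ j, hess f x i j * x j = x j * eval x (pderiv j (pderiv i f)) := by
      intro j
      rw [show hess f x i j = eval x (pderiv i (pderiv j f)) from rfl, hcomm i j]
      ring
    rw [Finset.sum_congr rfl fun j _ => this j]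
    rw [euler_eval (d-1) (pderiv i f) (pderiv_isHomogeneous hf i) x, hcast]
  have hBxv : ∀ v, x ⬝ᵥ M *ᵥ v = ((d:ℝ) - 1) * D v := by
    intro v
    rw [dp_symm M hMsym x v, dotProduct]
    rw [Finset.sum_congr rfl fun i _ => by rw [hMx i]]
    rw [hD]
    simp only []
    rw [gradCLM_apply, Finset.mul_sum]
    refine Finset.sum_congr rfl fun i _ => ?_
    ring
  have hDx : D x = (d:ℝ) * F := by
    rw [hD]
    simp only []
    rw [gradCLM_apply]
    rw [Finset.sum_congr rfl fun i _ => mul_comm (eval x (pderiv i f)) (x i)]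
    exact euler_eval d f hf x
  have hE : x ⬝ᵥ M *ᵥ x = (d:ℝ) * ((d:ℝ) - 1) * F := by
    rw [hBxv x, hDx]; ring
  have hEpos : 0 < x ⬝ᵥ M *ᵥ x := by
    rw [hE]
    have : 0 < (d:ℝ) - 1 := by linarith
    positivity
  -- reduction of the two Hessian conditions
  have hred_log : HessNegSemidef (fun y => Real.log (eval y f)) x ↔
      ∀ v, F * Q v ≤ (D v)^2 := by
    have hval : ∀ v, fderiv ℝ (fun y => fderiv ℝ (fun z => Real.log (eval z f)) y v) x v
        = -((F:ℝ)^2)⁻¹ * D v * D v + F⁻¹ * Q v := by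
      intro v
      exact second_dir f x hx _ (fun t => t⁻¹) (fun t => -(t^2)⁻¹)
        (fun y hy => ((hasFDerivAt_eval f y).log hy.ne').fderiv)
        (hasDerivAt_inv hx.ne') v
    unfold HessNegSemidef
    refine forall_congr' fun v => ?_
    rw [hval v]
    have heq : F^2 * (-(F^2)⁻¹ * D v * D v + F⁻¹ * Q v) = F * Q v - (D v)^2 := by
      field_simp
      ring
    constructor
    · intro h
      nlinarith [sq_nonneg F]
    · intro h
      nlinarith [sq_nonneg F, pow_pos hx 2]
  have hred_rpow : HessNegSemidef (fun y => (eval y f) ^ ((d : ℝ)⁻¹)) x ↔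
      ∀ v, F * Q v ≤ (1 - c) * (D v)^2 := by
    have hg : ∀ y : Fin n → ℝ, 0 < eval y f →
        fderiv ℝ (fun z => (eval z f) ^ c) y = (c * (eval y f) ^ (c - 1)) • gradCLM f y := by
      intro y hy
      have h1 : HasDerivAt (fun t : ℝ => t ^ c) (c * (eval y f) ^ (c - 1)) (eval y f) :=
        Real.hasDerivAt_rpow_const (Or.inl hy.ne')
      have h2 := h1.comp_hasFDerivAt y (hasFDerivAt_eval f y)
      exact h2.fderiv
    have hψ : HasDerivAt (fun t : ℝ => c * t ^ (c - 1))
        ((fun t => c * ((c-1) * t ^ (c-2))) F) F := by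
      simp only []
      have := (Real.hasDerivAt_rpow_const (x := F) (p := c - 1) (Or.inl hx.ne')).const_mul c
      rw [show c - 1 - 1 = c - 2 by ring] at this
      exact this
    have hval : ∀ v, fderiv ℝ (fun y => fderiv ℝ (fun z => (eval z f) ^ c) y v) x v
        = (c * ((c-1) * F ^ (c-2))) * D v * D v + (c * F ^ (c-1)) * Q v := by
      intro v
      exact second_dir f x hx _ (fun t => c * t ^ (c-1)) (fun t => c * ((c-1) * t ^ (c-2)))
        hg hψ v
    unfold HessNegSemidef
    rw [hc]
    refine forall_congr' fun v => ?_
    rw [hval v]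
    have hP2 : 0 < F ^ (c-2) := Real.rpow_pos_of_pos hx _
    have hP1 : F ^ (c-1) = F * F ^ (c-2) := by
      rw [show c - 1 = (c-2) + 1 by ring, Real.rpow_add hx, Real.rpow_one]
      ring
    have hfac : (c * ((c-1) * F ^ (c-2))) * D v * D v + (c * F ^ (c-1)) * Q v
        = (c * F ^ (c-2)) * ((c - 1) * (D v)^2 + F * Q v) := by
      rw [hP1]; ring
    rw [hfac, aux_mul_nonpos_iff_pos (by positivity)]
    constructor
    · intro h; nlinarith
    · intro h; nlinarith
  -- the implications between the algebraic conditions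
  have hi12 : (∀ v, F * Q v ≤ (1 - c) * (D v)^2) → (∀ v, F * Q v ≤ (D v)^2) := by
    intro h v
    have := h v
    nlinarith [sq_nonneg (D v)]
  have hi23 : (∀ v, F * Q v ≤ (D v)^2) → posEigCount (hess f x) = 1 := by
    intro h
    have hb : ∀ v, v ⬝ᵥ M *ᵥ v ≤ F⁻¹ * ((gradCLM f x).toLinearMap v)^2 := by
      intro v
      have h1 := h v
      rw [hQmat v] at h1
      have : v ⬝ᵥ M *ᵥ v = F⁻¹ * (F * (v ⬝ᵥ M *ᵥ v)) := by
        field_simp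
      rw [this]
      have h2 : (gradCLM f x).toLinearMap v = D v := rfl
      rw [h2]
      exact mul_le_mul_of_nonneg_left h1 (inv_nonneg.mpr hx.le)
    have hle1 : {i | 0 < hMsym.eigenvalues i}.ncard ≤ 1 :=
      atMostOne M hMsym (gradCLM f x).toLinearMap F⁻¹ hb
    have hge1 : {i | 0 < hMsym.eigenvalues i}.Nonempty :=
      posEig_nonempty M hMsym x hEpos
    have hpos : 0 < {i | 0 < hMsym.eigenvalues i}.ncard :=
      (Set.ncard_pos (Set.toFinite _)).mpr hge1
    rw [posEigCount, dif_pos (show (hess f x).IsHermitian from hMsym)]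
    omega
  have hi31 : posEigCount (hess f x) = 1 → (∀ v, F * Q v ≤ (1 - c) * (D v)^2) := by
    intro h v
    rw [posEigCount, dif_pos (show (hess f x).IsHermitian from hMsym)] at h
    have hcount : {i | 0 < hMsym.eigenvalues i}.ncard ≤ 1 := le_of_eq h
    have key := onePos_bound M hMsym hcount x hEpos v
    rw [hQmat v]
    rw [hE, hBxv v] at key
    -- key : q v * (d * (d-1) * F) ≤ ((d-1) * D v)^2
    have hd1 : (0:ℝ) < (d:ℝ) - 1 := by linarith
    rw [← mul_le_mul_iff_left₀ (show (0:ℝ) < (d:ℝ) * ((d:ℝ)-1) by positivity)]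
    calc F * (v ⬝ᵥ M *ᵥ v) * ((d:ℝ) * ((d:ℝ)-1))
        = (v ⬝ᵥ M *ᵥ v) * ((d:ℝ) * ((d:ℝ) - 1) * F) * 1 := by ring
      _ ≤ (((d:ℝ) - 1) * D v)^2 := by rw [mul_one]; exact key
      _ = (1 - c) * (D v)^2 * ((d:ℝ) * ((d:ℝ)-1)) := by
          rw [hc]
          field_simp
  constructor
  · rw [hred_rpow, hred_log]
    exact ⟨hi12, fun h => hi31 (hi23 h)⟩
  · rw [hred_log]
    exact ⟨hi23, fun h => hi12 (hi31 h)⟩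

end LorentzianPaper
end

section
/- Let f ∈ ℝ[x_1,…,x_n] be any polynomial all of whose coefficients are nonnegative (in particular, any Lorentzian polynomial). Then for all x, y, z ∈ ℝ^n with nonnegative coordinates, f(x+y+z) + f(x) ≥ f(x+y) + f(x+z). -/
open MvPolynomial

open Finset in
lemma pow_shift_mono (k : ℕ) {u v t : ℝ} (hv : 0 ≤ v) (hvu : v ≤ u) (ht : 0 ≤ t) :
    (v + t) ^ k + u ^ k ≤ (u + t) ^ k + v ^ k := by
  have key : ∑ i ∈ Finset.range k, v ^ i * t ^ (k - i) * (k.choose i : ℝ) ≤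
      ∑ i ∈ Finset.range k, u ^ i * t ^ (k - i) * (k.choose i : ℝ) := by
    apply Finset.sum_le_sum
    intro i _
    have h1 : v ^ i ≤ u ^ i := pow_le_pow_left₀ hv hvu i
    have h2 : (0:ℝ) ≤ t ^ (k - i) := pow_nonneg ht _
    have h3 : (0:ℝ) ≤ (k.choose i : ℝ) := Nat.cast_nonneg _
    exact mul_le_mul_of_nonneg_right (mul_le_mul_of_nonneg_right h1 h2) h3
  rw [add_pow, add_pow, Finset.sum_range_succ, Finset.sum_range_succ]
  simp only [Nat.sub_self, pow_zero, Nat.choose_self, Nat.cast_one, mul_one]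
  linarith

lemma prod_quad {ι : Type*} (s : Finset ι) (a b c d : ι → ℝ)
    (h0 : ∀ i ∈ s, 0 ≤ d i) (h1 : ∀ i ∈ s, d i ≤ b i) (h2 : ∀ i ∈ s, d i ≤ c i)
    (h3 : ∀ i ∈ s, b i ≤ a i) (h4 : ∀ i ∈ s, c i ≤ a i)
    (h5 : ∀ i ∈ s, b i + c i ≤ a i + d i) :
    (0 ≤ ∏ i ∈ s, d i) ∧ (∏ i ∈ s, d i ≤ ∏ i ∈ s, b i) ∧ (∏ i ∈ s, d i ≤ ∏ i ∈ s, c i) ∧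
    (∏ i ∈ s, b i ≤ ∏ i ∈ s, a i) ∧ (∏ i ∈ s, c i ≤ ∏ i ∈ s, a i) ∧
    (∏ i ∈ s, b i + ∏ i ∈ s, c i ≤ ∏ i ∈ s, a i + ∏ i ∈ s, d i) := by
  classical
  induction s using Finset.induction with
  | empty => simp
  | @insert j s hj ih =>
    have mem : ∀ i ∈ s, i ∈ insert j s := fun i hi => Finset.mem_insert_of_mem hi
    obtain ⟨D0, DB, DC, BA, CA, SUM⟩ :=
      ih (fun i hi => h0 i (mem i hi)) (fun i hi => h1 i (mem i hi))
        (fun i hi => h2 i (mem i hi)) (fun i hi => h3 i (mem i hi))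
        (fun i hi => h4 i (mem i hi)) (fun i hi => h5 i (mem i hi))
    have jm : j ∈ insert j s := Finset.mem_insert_self j s
    have d0 := h0 j jm; have db := h1 j jm; have dc := h2 j jm
    have ba := h3 j jm; have ca := h4 j jm; have sum := h5 j jm
    rw [Finset.prod_insert hj, Finset.prod_insert hj, Finset.prod_insert hj,
      Finset.prod_insert hj]
    set A := ∏ i ∈ s, a i; set B := ∏ i ∈ s, b i; set C := ∏ i ∈ s, c i
    set D := ∏ i ∈ s, d i
    have B0 : 0 ≤ B := le_trans D0 DB
    have C0 : 0 ≤ C := le_trans D0 DC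
    have A0 : 0 ≤ A := le_trans B0 BA
    have b0 : 0 ≤ b j := le_trans d0 db
    have c0 : 0 ≤ c j := le_trans d0 dc
    have a0 : 0 ≤ a j := le_trans b0 ba
    refine ⟨mul_nonneg d0 D0, mul_le_mul db DB D0 b0, mul_le_mul dc DC D0 c0,
      mul_le_mul ba BA B0 a0, mul_le_mul ca CA C0 a0, ?_⟩
    nlinarith [mul_nonneg (sub_nonneg.2 (le_trans DC CA)) (sub_nonneg.2 db),
      mul_nonneg C0 (sub_nonneg.2 dc)]

/-- Supermodularity for polynomials with nonnegative coefficients: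
if every coefficient of `f` is nonnegative, then for all nonnegative `x, y, z`,
`f(x+y+z) + f(x) ≥ f(x+y) + f(x+z)`. -/
theorem statement5 {n : ℕ} (f : MvPolynomial (Fin n) ℝ)
    (hf : ∀ α : Fin n →₀ ℕ, 0 ≤ f.coeff α)
    (x y z : Fin n → ℝ) (hx : ∀ i, 0 ≤ x i) (hy : ∀ i, 0 ≤ y i) (hz : ∀ i, 0 ≤ z i) :
    eval (x + y) f + eval (x + z) f ≤ eval (x + y + z) f + eval x f := by
  rw [eval_eq', eval_eq', eval_eq', eval_eq', ← Finset.sum_add_distrib,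
    ← Finset.sum_add_distrib]
  apply Finset.sum_le_sum
  intro α _
  rw [← mul_add, ← mul_add]
  apply mul_le_mul_of_nonneg_left _ (hf α)
  have key := prod_quad Finset.univ
    (fun i => (x i + y i + z i) ^ α i) (fun i => (x i + y i) ^ α i)
    (fun i => (x i + z i) ^ α i) (fun i => x i ^ α i)
    (fun i _ => pow_nonneg (hx i) _)
    (fun i _ => pow_le_pow_left₀ (hx i) (by linarith [hy i]) _)
    (fun i _ => pow_le_pow_left₀ (hx i) (by linarith [hz i]) _)
    (fun i _ => pow_le_pow_left₀ (by linarith [hx i, hy i]) (by linarith [hz i]) _)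
    (fun i _ => pow_le_pow_left₀ (by linarith [hx i, hz i]) (by linarith [hy i]) _)
    (fun i _ => by
      have := pow_shift_mono (α i) (u := x i + z i) (v := x i) (t := y i)
        (hx i) (by linarith [hz i]) (hy i)
      rw [show x i + y i + z i = x i + z i + y i from by ring]
      linarith)
  simp only [Pi.add_apply]
  exact key.2.2.2.2.2
end

section
/- Let Q = [−1,1]² × {0} ⊂ ℝ³ and let B = conv(Q ∪ {(0,0,1), (0,0,−1)}). Then vol₃(B) = 8/3, vol₂(p_1(B)) = vol₂(p_2(B)) = 2, and vol₁(p_{12}(B)) = 2, where p_1, p_2 are the orthogonal projections onto the coordinate planes e_1^⊥, e_2^⊥ and p_{12} is the orthogonal projection onto span(e_1,e_2)^⊥ = ℝe_3. In particular, vol₃(B)·vol₁(p_{12}(B)) = 16/3 > 4 = vol₂(p_1(B))·vol₂(p_2(B)), so the inequality vol(B)·vol(p_{12}(B)) ≤ vol(p_1(B))·vol(p_2(B)) fails for B. -/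
open MeasureTheory

namespace ConvexPaper

/-- The square `[−1,1]² × {0} ⊂ ℝ³`. -/
def Qsq : Set (EuclideanSpace ℝ (Fin 3)) :=
  {x | x 0 ∈ Set.Icc (-1 : ℝ) 1 ∧ x 1 ∈ Set.Icc (-1 : ℝ) 1 ∧ x 2 = 0}

/-- The point `e₃ = (0,0,1)`. -/
noncomputable def e3 : EuclideanSpace ℝ (Fin 3) :=
  WithLp.toLp 2 (fun i => if i = 2 then (1 : ℝ) else 0)

/-- The convex body `B = conv(Q ∪ {±e₃})`. -/
noncomputable def Bbody : Set (EuclideanSpace ℝ (Fin 3)) :=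
  convexHull ℝ (Qsq ∪ {e3, -e3})

/-- Projection deleting the first coordinate (onto `e₁^⊥`). -/
noncomputable def p1 (x : EuclideanSpace ℝ (Fin 3)) : EuclideanSpace ℝ (Fin 2) :=
  WithLp.toLp 2 (fun j : Fin 2 => x ⟨(j : ℕ) + 1, by omega⟩)

/-- Projection deleting the second coordinate (onto `e₂^⊥`). -/
noncomputable def p2 (x : EuclideanSpace ℝ (Fin 3)) : EuclideanSpace ℝ (Fin 2) :=
  WithLp.toLp 2 (fun j : Fin 2 => if j = 0 then x 0 else x 2)

/-- Projection onto `span(e₁,e₂)^⊥ = ℝe₃`, keeping only the third coordinate. -/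
noncomputable def p12 (x : EuclideanSpace ℝ (Fin 3)) : EuclideanSpace ℝ (Fin 1) :=
  WithLp.toLp 2 (fun _ : Fin 1 => x 2)


open Set

section Aux

lemma ofReal_max_zero (a : ℝ) : ENNReal.ofReal (max a 0) = ENNReal.ofReal a := by
  rcases le_total a 0 with h | h
  · simp [max_eq_right h, ENNReal.ofReal_of_nonpos h]
  · simp [max_eq_left h]

-- the 1D slice function
noncomputable def g1 : ℝ → ℝ := fun c => max (2 * (1 - |c|)) 0

lemma g1_cont : Continuous g1 := by
  unfold g1; fun_prop

lemma g1_nonneg : ∀ c, 0 ≤ g1 c := fun c => le_max_right _ _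

lemma g1_compact_support : HasCompactSupport g1 := by
  apply HasCompactSupport.intro (isCompact_Icc (a := (-1:ℝ)) (b := 1))
  intro x hx
  simp only [mem_Icc, not_and_or, not_le] at hx
  have : 1 < |x| := by rcases hx with h | h <;> [exact lt_of_lt_of_le (by linarith) (neg_le_abs x); exact lt_of_lt_of_le h (le_abs_self x)]
  have hle : 2 * (1 - |x|) ≤ 0 := by nlinarith
  simp [g1, max_eq_right hle]

lemma integral_g1 : ∫ c, g1 c = 2 := by
  have h1 : ∫ c, g1 c = ∫ c in Icc (-1:ℝ) 1, g1 c := by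
    rw [setIntegral_eq_integral_of_forall_compl_eq_zero]
    intro x hx
    simp only [mem_Icc, not_and_or, not_le] at hx
    have : 1 < |x| := by rcases hx with h | h <;> [exact lt_of_lt_of_le (by linarith) (neg_le_abs x); exact lt_of_lt_of_le h (le_abs_self x)]
    have hle : 2 * (1 - |x|) ≤ 0 := by nlinarith
    simp [g1, max_eq_right hle]
  rw [h1, integral_Icc_eq_integral_Ioc, ← intervalIntegral.integral_of_le (by norm_num : (-1:ℝ) ≤ 1)]
  have hsplit : (∫ x in (-1:ℝ)..0, g1 x) + ∫ x in (0:ℝ)..1, g1 x = ∫ x in (-1:ℝ)..1, g1 x :=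
    intervalIntegral.integral_add_adjacent_intervals
      (g1_cont.intervalIntegrable _ _) (g1_cont.intervalIntegrable _ _)
  have e1 : ∫ x in (-1:ℝ)..0, g1 x = ∫ x in (-1:ℝ)..0, (2 + 2*x) := by
    apply intervalIntegral.integral_congr
    intro x hx
    rw [uIcc_of_le (by norm_num)] at hx
    have h2 : |x| = -x := abs_of_nonpos hx.2
    have h3 : (0:ℝ) ≤ 2 * (1 - -x) := by linarith [hx.1]
    simp only [g1, h2]
    rw [max_eq_left h3]; ring
  have e2 : ∫ x in (0:ℝ)..1, g1 x = ∫ x in (0:ℝ)..1, (2 - 2*x) := by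
    apply intervalIntegral.integral_congr
    intro x hx
    rw [uIcc_of_le (by norm_num)] at hx
    have h2 : |x| = x := abs_of_nonneg hx.1
    have h3 : (0:ℝ) ≤ 2 * (1 - x) := by linarith [hx.2]
    simp only [g1, h2]
    rw [max_eq_left h3]; ring
  have v1 : ∫ x in (-1:ℝ)..0, (2 + 2*x) = 1 := by
    rw [intervalIntegral.integral_add (intervalIntegrable_const)
        ((by exact (continuous_const.mul continuous_id).intervalIntegrable _ _ : IntervalIntegrable (fun x : ℝ => 2*x) volume _ _)),
      intervalIntegral.integral_const, intervalIntegral.integral_const_mul, integral_id]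
    norm_num
  have v2 : ∫ x in (0:ℝ)..1, (2 - 2*x) = 1 := by
    rw [intervalIntegral.integral_sub (intervalIntegrable_const)
        ((by exact (continuous_const.mul continuous_id).intervalIntegrable _ _ : IntervalIntegrable (fun x : ℝ => 2*x) volume _ _)),
      intervalIntegral.integral_const, intervalIntegral.integral_const_mul, integral_id]
    norm_num
  rw [e1, e2, v1, v2] at hsplit
  rw [← hsplit]
  norm_num

noncomputable def g2 : ℝ → ℝ := fun c => (g1 c)^2

lemma g2_cont : Continuous g2 := g1_cont.pow 2

lemma g2_nonneg : ∀ c, 0 ≤ g2 c := fun c => sq_nonneg _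

lemma g2_compact_support : HasCompactSupport g2 := by
  have : g2 = g1 * g1 := by funext c; simp [g2, sq]
  rw [this]; exact g1_compact_support.mul_right

lemma integral_g2 : ∫ c, g2 c = 8/3 := by
  have h1 : ∫ c, g2 c = ∫ c in Icc (-1:ℝ) 1, g2 c := by
    rw [setIntegral_eq_integral_of_forall_compl_eq_zero]
    intro x hx
    simp only [mem_Icc, not_and_or, not_le] at hx
    have : 1 < |x| := by rcases hx with h | h <;> [exact lt_of_lt_of_le (by linarith) (neg_le_abs x); exact lt_of_lt_of_le h (le_abs_self x)]
    have hle : 2 * (1 - |x|) ≤ 0 := by nlinarith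
    simp [g2, g1, max_eq_right hle]
  rw [h1, integral_Icc_eq_integral_Ioc, ← intervalIntegral.integral_of_le (by norm_num : (-1:ℝ) ≤ 1)]
  have hsplit : (∫ x in (-1:ℝ)..0, g2 x) + ∫ x in (0:ℝ)..1, g2 x = ∫ x in (-1:ℝ)..1, g2 x :=
    intervalIntegral.integral_add_adjacent_intervals
      (g2_cont.intervalIntegrable _ _) (g2_cont.intervalIntegrable _ _)
  have e1 : ∫ x in (-1:ℝ)..0, g2 x = ∫ x in (-1:ℝ)..0, (4 + 8*x + 4*x^2) := by
    apply intervalIntegral.integral_congr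
    intro x hx
    rw [uIcc_of_le (by norm_num)] at hx
    have h2 : |x| = -x := abs_of_nonpos hx.2
    have h3 : (0:ℝ) ≤ 2 * (1 - -x) := by linarith [hx.1]
    simp only [g2, g1, h2]
    rw [max_eq_left h3]; ring
  have e2 : ∫ x in (0:ℝ)..1, g2 x = ∫ x in (0:ℝ)..1, (4 - 8*x + 4*x^2) := by
    apply intervalIntegral.integral_congr
    intro x hx
    rw [uIcc_of_le (by norm_num)] at hx
    have h2 : |x| = x := abs_of_nonneg hx.1
    have h3 : (0:ℝ) ≤ 2 * (1 - x) := by linarith [hx.2]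
    simp only [g2, g1, h2]
    rw [max_eq_left h3]; ring
  have ii1 : ∀ a b : ℝ, IntervalIntegrable (fun x : ℝ => 4 + 8*x) volume a b := by
    intro a b; exact (continuous_const.add (continuous_const.mul continuous_id)).intervalIntegrable _ _
  have ii2 : ∀ a b : ℝ, IntervalIntegrable (fun x : ℝ => 4*x^2) volume a b := by
    intro a b; exact (continuous_const.mul (continuous_pow 2)).intervalIntegrable _ _
  have ii3 : ∀ a b : ℝ, IntervalIntegrable (fun x : ℝ => 8*x) volume a b := by
    intro a b; exact (continuous_const.mul continuous_id).intervalIntegrable _ _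
  have v1 : ∫ x in (-1:ℝ)..0, (4 + 8*x + 4*x^2) = 4/3 := by
    rw [intervalIntegral.integral_add (ii1 _ _) (ii2 _ _),
      intervalIntegral.integral_add (intervalIntegrable_const) (ii3 _ _),
      intervalIntegral.integral_const, intervalIntegral.integral_const_mul,
      intervalIntegral.integral_const_mul, integral_id, integral_pow]
    norm_num
  have v2 : ∫ x in (0:ℝ)..1, (4 - 8*x + 4*x^2) = 4/3 := by
    have : (fun x : ℝ => 4 - 8*x + 4*x^2) = fun x : ℝ => (4 + 8*x + 4*x^2) - 16*x := by
      funext x; ring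
    rw [this, intervalIntegral.integral_sub (((ii1 0 1).add (ii2 0 1)))
        ((by exact (continuous_const.mul continuous_id).intervalIntegrable _ _ : IntervalIntegrable (fun x : ℝ => 16*x) volume _ _)),
      intervalIntegral.integral_add (ii1 _ _) (ii2 _ _),
      intervalIntegral.integral_add (intervalIntegrable_const) (ii3 _ _),
      intervalIntegral.integral_const, intervalIntegral.integral_const_mul,
      intervalIntegral.integral_const_mul, intervalIntegral.integral_const_mul, integral_id, integral_pow]
    norm_num
  rw [e1, e2, v1, v2] at hsplit
  rw [← hsplit]
  norm_num

lemma slice_pi2 (c : ℝ) :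
    (volume : Measure (Fin 2 → ℝ)) {z | |z 0| + |c| ≤ 1 ∧ |z 1| + |c| ≤ 1}
      = ENNReal.ofReal (g1 c) * ENNReal.ofReal (g1 c) := by
  have hset : {z : Fin 2 → ℝ | |z 0| + |c| ≤ 1 ∧ |z 1| + |c| ≤ 1}
      = Set.pi Set.univ (fun _ => Icc (-(1-|c|)) (1-|c|)) := by
    ext z
    simp only [mem_setOf_eq, mem_univ_pi, mem_Icc, Fin.forall_fin_two]
    constructor
    · rintro ⟨h1, h2⟩
      exact ⟨abs_le.1 (by linarith), abs_le.1 (by linarith)⟩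
    · rintro ⟨h1, h2⟩
      have := abs_le.2 h1; have := abs_le.2 h2
      constructor <;> linarith
  rw [hset, volume_pi_pi, Real.volume_Icc]
  have : (1 - |c|) - -(1-|c|) = 2 * (1 - |c|) := by ring
  rw [this, Fin.prod_univ_two]
  rw [← ofReal_max_zero (2 * (1 - |c|))]
  rfl

lemma slice_pi1 (c : ℝ) :
    (volume : Measure (Fin 1 → ℝ)) {z | |z 0| + |c| ≤ 1}
      = ENNReal.ofReal (g1 c) := by
  have hset : {z : Fin 1 → ℝ | |z 0| + |c| ≤ 1}
      = Set.pi Set.univ (fun _ => Icc (-(1-|c|)) (1-|c|)) := by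
    ext z
    simp only [mem_setOf_eq, mem_univ_pi, mem_Icc, Fin.forall_fin_one]
    constructor
    · intro h1
      exact abs_le.1 (by linarith)
    · intro h1
      have := abs_le.2 h1; linarith
  rw [hset, volume_pi_pi, Real.volume_Icc]
  have : (1 - |c|) - -(1-|c|) = 2 * (1 - |c|) := by ring
  rw [this, Fin.prod_univ_one]
  rw [← ofReal_max_zero (2 * (1 - |c|))]
  rfl

lemma vol_pi3 :
    (volume : Measure (Fin 3 → ℝ)) {y | |y 0| + |y 2| ≤ 1 ∧ |y 1| + |y 2| ≤ 1}
      = ENNReal.ofReal (8/3) := by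
  set ψ := MeasurableEquiv.piFinSuccAbove (fun _ : Fin 3 => ℝ) 2 with hψ
  have hmp := volume_preserving_piFinSuccAbove (fun _ : Fin 3 => ℝ) 2
  set U : Set (ℝ × (Fin 2 → ℝ)) :=
    {p | |p.2 0| + |p.1| ≤ 1 ∧ |p.2 1| + |p.1| ≤ 1} with hU
  have hpre : {y : Fin 3 → ℝ | |y 0| + |y 2| ≤ 1 ∧ |y 1| + |y 2| ≤ 1} = ψ ⁻¹' U := rfl
  have hm1 : Measurable fun p : ℝ × (Fin 2 → ℝ) => |p.2 0| + |p.1| := by fun_prop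
  have hm2 : Measurable fun p : ℝ × (Fin 2 → ℝ) => |p.2 1| + |p.1| := by fun_prop
  have hUm : MeasurableSet U :=
    (measurableSet_le hm1 measurable_const).inter (measurableSet_le hm2 measurable_const)
  rw [hpre, hmp.measure_preimage_equiv, Measure.volume_eq_prod, Measure.prod_apply hUm]
  have hslice : ∀ c : ℝ, (volume : Measure (Fin 2 → ℝ)) (Prod.mk c ⁻¹' U)
      = ENNReal.ofReal (g2 c) := by
    intro c
    have : Prod.mk c ⁻¹' U = {z : Fin 2 → ℝ | |z 0| + |c| ≤ 1 ∧ |z 1| + |c| ≤ 1} := rfl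
    rw [this, slice_pi2, ← ENNReal.ofReal_mul (g1_nonneg c)]
    congr 1
    simp [g2, sq]
  simp_rw [hslice]
  rw [← ofReal_integral_eq_lintegral_ofReal
      (g2_cont.integrable_of_hasCompactSupport g2_compact_support)
      (ae_of_all _ g2_nonneg), integral_g2]

lemma vol_pi2 :
    (volume : Measure (Fin 2 → ℝ)) {y | |y 0| + |y 1| ≤ 1} = ENNReal.ofReal 2 := by
  set ψ := MeasurableEquiv.piFinSuccAbove (fun _ : Fin 2 => ℝ) 1 with hψ
  have hmp := volume_preserving_piFinSuccAbove (fun _ : Fin 2 => ℝ) 1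
  set U : Set (ℝ × (Fin 1 → ℝ)) := {p | |p.2 0| + |p.1| ≤ 1} with hU
  have hpre : {y : Fin 2 → ℝ | |y 0| + |y 1| ≤ 1} = ψ ⁻¹' U := rfl
  have hm1 : Measurable fun p : ℝ × (Fin 1 → ℝ) => |p.2 0| + |p.1| := by fun_prop
  have hUm : MeasurableSet U := measurableSet_le hm1 measurable_const
  rw [hpre, hmp.measure_preimage_equiv, Measure.volume_eq_prod, Measure.prod_apply hUm]
  have hslice : ∀ c : ℝ, (volume : Measure (Fin 1 → ℝ)) (Prod.mk c ⁻¹' U)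
      = ENNReal.ofReal (g1 c) := by
    intro c
    have : Prod.mk c ⁻¹' U = {z : Fin 1 → ℝ | |z 0| + |c| ≤ 1} := rfl
    rw [this, slice_pi1]
  simp_rw [hslice]
  rw [← ofReal_integral_eq_lintegral_ofReal
      (g1_cont.integrable_of_hasCompactSupport g1_compact_support)
      (ae_of_all _ g1_nonneg), integral_g1]

lemma vol_pi1 :
    (volume : Measure (Fin 1 → ℝ)) {y | |y 0| ≤ 1} = ENNReal.ofReal 2 := by
  have hset : {y : Fin 1 → ℝ | |y 0| ≤ 1} = Set.pi Set.univ (fun _ => Icc (-1:ℝ) 1) := by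
    ext z
    simp only [mem_setOf_eq, mem_univ_pi, mem_Icc, Fin.forall_fin_one, abs_le]
  rw [hset, volume_pi_pi, Real.volume_Icc, Fin.prod_univ_one]
  norm_num

def S3 : Set (EuclideanSpace ℝ (Fin 3)) :=
  {x | |x 0| + |x 2| ≤ 1 ∧ |x 1| + |x 2| ≤ 1}

lemma convex_S3 : Convex ℝ S3 := by
  intro x hx y hy a b ha hb hab
  obtain ⟨hx1, hx2⟩ := hx
  obtain ⟨hy1, hy2⟩ := hy
  have key : ∀ i j : Fin 3, |x i| + |x j| ≤ 1 → |y i| + |y j| ≤ 1 →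
      |(a • x + b • y) i| + |(a • x + b • y) j| ≤ 1 := by
    intro i j hxij hyij
    have hci : (a • x + b • y) i = a * x i + b * y i := rfl
    have hcj : (a • x + b • y) j = a * x j + b * y j := rfl
    rw [hci, hcj]
    have h1 : |a * x i + b * y i| ≤ a * |x i| + b * |y i| := by
      calc |a * x i + b * y i| ≤ |a * x i| + |b * y i| := abs_add_le _ _
        _ = a * |x i| + b * |y i| := by
            rw [abs_mul, abs_mul, abs_of_nonneg ha, abs_of_nonneg hb]
    have h2 : |a * x j + b * y j| ≤ a * |x j| + b * |y j| := by
      calc |a * x j + b * y j| ≤ |a * x j| + |b * y j| := abs_add_le _ _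
        _ = a * |x j| + b * |y j| := by
            rw [abs_mul, abs_mul, abs_of_nonneg ha, abs_of_nonneg hb]
    nlinarith
  exact ⟨key 0 2 hx1 hy1, key 1 2 hx2 hy2⟩

lemma gen_subset_S3 : Qsq ∪ {e3, -e3} ⊆ S3 := by
  rintro x (⟨h0, h1, h2⟩ | rfl | rfl)
  · constructor
    · rw [h2]; simp [abs_le]; exact h0
    · rw [h2]; simp [abs_le]; exact h1
  · constructor <;> simp [e3]
  · constructor <;> simp [e3]

lemma S3_subset_Bbody : S3 ⊆ Bbody := by
  rintro x ⟨h1, h2⟩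
  have hx2le : |x 2| ≤ 1 := by
    have := abs_nonneg (x 0); linarith
  rcases le_or_gt 0 (x 2) with hpos | hneg
  · -- use apex e3, coefficient t = x 2
    set t := x 2 with ht
    have habs : |x 2| = t := abs_of_nonneg hpos
    have ht1 : t ≤ 1 := habs ▸ hx2le
    set q : EuclideanSpace ℝ (Fin 3) :=
      WithLp.toLp 2 (fun i => if i = 2 then 0 else x i / (1 - t) : Fin 3 → ℝ) with hq
    have hq0 : q 0 = x 0 / (1 - t) := rfl
    have hq1 : q 1 = x 1 / (1 - t) := rfl
    have hq2 : q 2 = 0 := rfl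
    have hdiv : ∀ i : Fin 3, |x i| + t ≤ 1 → x i / (1 - t) ∈ Icc (-1:ℝ) 1 := by
      intro i hi
      rcases eq_or_lt_of_le ht1 with he | hlt
      · have : x i = 0 := by
          have : |x i| ≤ 0 := by rw [← he] at hi; linarith
          exact abs_eq_zero.1 (le_antisymm this (abs_nonneg _))
        simp [this]
      · rw [mem_Icc, ← abs_le, abs_div, abs_of_pos (by linarith : (0:ℝ) < 1 - t),
          div_le_one (by linarith : (0:ℝ) < 1 - t)]
        linarith
    have hqQ : q ∈ Qsq := ⟨hdiv 0 (habs ▸ h1), hdiv 1 (habs ▸ h2), hq2⟩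
    have hcomb : (1 - t) • q + t • e3 = x := by
      ext i
      fin_cases i
      · show (1 - t) * q 0 + t * e3 0 = x 0
        rw [hq0]
        simp only [e3]
        rcases eq_or_lt_of_le ht1 with he | hlt
        · have hx0 : x 0 = 0 := by
            have h1' := habs ▸ h1
            have : |x 0| ≤ 0 := by rw [← he] at h1'; linarith
            exact abs_eq_zero.1 (le_antisymm this (abs_nonneg _))
          simp [hx0]
        · have hne : (1:ℝ) - t ≠ 0 := by linarith
          norm_num
          field_simp
          simp
      · show (1 - t) * q 1 + t * e3 1 = x 1
        rw [hq1]
        simp only [e3]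
        rcases eq_or_lt_of_le ht1 with he | hlt
        · have hx1 : x 1 = 0 := by
            have h2' := habs ▸ h2
            have : |x 1| ≤ 0 := by rw [← he] at h2'; linarith
            exact abs_eq_zero.1 (le_antisymm this (abs_nonneg _))
          simp [hx1]
        · have hne : (1:ℝ) - t ≠ 0 := by linarith
          norm_num
          field_simp
          simp
      · show (1 - t) * q 2 + t * e3 2 = x 2
        rw [hq2]
        simp [e3, ht]
    have hqB : q ∈ Bbody := subset_convexHull ℝ _ (Or.inl hqQ)
    have heB : e3 ∈ Bbody := subset_convexHull ℝ _ (Or.inr (Or.inl rfl))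
    have := (convex_convexHull ℝ (Qsq ∪ {e3, -e3})) hqB heB
      (by linarith : (0:ℝ) ≤ 1 - t) hpos (by ring)
    rwa [hcomb] at this
  · -- use apex -e3, coefficient t = -x 2
    set t := -(x 2) with ht
    have hpos' : 0 ≤ t := by simp [ht]; linarith
    have habs : |x 2| = t := abs_of_neg hneg
    have ht1 : t ≤ 1 := habs ▸ hx2le
    set q : EuclideanSpace ℝ (Fin 3) :=
      WithLp.toLp 2 (fun i => if i = 2 then 0 else x i / (1 - t) : Fin 3 → ℝ) with hq
    have hq0 : q 0 = x 0 / (1 - t) := rfl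
    have hq1 : q 1 = x 1 / (1 - t) := rfl
    have hq2 : q 2 = 0 := rfl
    have hdiv : ∀ i : Fin 3, |x i| + t ≤ 1 → x i / (1 - t) ∈ Icc (-1:ℝ) 1 := by
      intro i hi
      rcases eq_or_lt_of_le ht1 with he | hlt
      · have : x i = 0 := by
          have : |x i| ≤ 0 := by rw [← he] at hi; linarith
          exact abs_eq_zero.1 (le_antisymm this (abs_nonneg _))
        simp [this]
      · rw [mem_Icc, ← abs_le, abs_div, abs_of_pos (by linarith : (0:ℝ) < 1 - t),
          div_le_one (by linarith : (0:ℝ) < 1 - t)]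
        linarith
    have hqQ : q ∈ Qsq := ⟨hdiv 0 (habs ▸ h1), hdiv 1 (habs ▸ h2), hq2⟩
    have hcomb : (1 - t) • q + t • (-e3) = x := by
      ext i
      fin_cases i
      · show (1 - t) * q 0 + t * (-(e3 0)) = x 0
        rw [hq0]
        simp only [e3]
        rcases eq_or_lt_of_le ht1 with he | hlt
        · have hx0 : x 0 = 0 := by
            have h1' := habs ▸ h1
            have : |x 0| ≤ 0 := by rw [← he] at h1'; linarith
            exact abs_eq_zero.1 (le_antisymm this (abs_nonneg _))
          simp [hx0]
        · have hne : (1:ℝ) - t ≠ 0 := by linarith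
          norm_num
          field_simp
          simp
      · show (1 - t) * q 1 + t * (-(e3 1)) = x 1
        rw [hq1]
        simp only [e3]
        rcases eq_or_lt_of_le ht1 with he | hlt
        · have hx1 : x 1 = 0 := by
            have h2' := habs ▸ h2
            have : |x 1| ≤ 0 := by rw [← he] at h2'; linarith
            exact abs_eq_zero.1 (le_antisymm this (abs_nonneg _))
          simp [hx1]
        · have hne : (1:ℝ) - t ≠ 0 := by linarith
          norm_num
          field_simp
          simp
      · show (1 - t) * q 2 + t * (-(e3 2)) = x 2
        rw [hq2]
        simp [e3, ht]
    have hqB : q ∈ Bbody := subset_convexHull ℝ _ (Or.inl hqQ)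
    have heB : -e3 ∈ Bbody := subset_convexHull ℝ _ (Or.inr (Or.inr rfl))
    have := (convex_convexHull ℝ (Qsq ∪ {e3, -e3})) hqB heB
      (by linarith : (0:ℝ) ≤ 1 - t) hpos' (by ring)
    rwa [hcomb] at this

lemma Bbody_eq_S3 : Bbody = S3 :=
  le_antisymm (convexHull_min gen_subset_S3 convex_S3) S3_subset_Bbody


lemma vol_S3 : volume S3 = ENNReal.ofReal (8/3) := by
  have h := (EuclideanSpace.volume_preserving_symm_measurableEquiv_toLp (ι := Fin 3)).measure_preimage_equiv
    {y : Fin 3 → ℝ | |y 0| + |y 2| ≤ 1 ∧ |y 1| + |y 2| ≤ 1}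
  have h2 : volume S3 = (volume : Measure (Fin 3 → ℝ))
      {y | |y 0| + |y 2| ≤ 1 ∧ |y 1| + |y 2| ≤ 1} := h ▸ rfl
  rw [h2, vol_pi3]

def D2 : Set (EuclideanSpace ℝ (Fin 2)) := {y | |y 0| + |y 1| ≤ 1}

lemma vol_D2 : volume D2 = ENNReal.ofReal 2 := by
  have h := (EuclideanSpace.volume_preserving_symm_measurableEquiv_toLp (ι := Fin 2)).measure_preimage_equiv
    {y : Fin 2 → ℝ | |y 0| + |y 1| ≤ 1}
  have h2 : volume D2 = (volume : Measure (Fin 2 → ℝ)) {y | |y 0| + |y 1| ≤ 1} := h ▸ rfl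
  rw [h2, vol_pi2]

def I1 : Set (EuclideanSpace ℝ (Fin 1)) := {y | |y 0| ≤ 1}

lemma vol_I1 : volume I1 = ENNReal.ofReal 2 := by
  have h := (EuclideanSpace.volume_preserving_symm_measurableEquiv_toLp (ι := Fin 1)).measure_preimage_equiv
    {y : Fin 1 → ℝ | |y 0| ≤ 1}
  have h2 : volume I1 = (volume : Measure (Fin 1 → ℝ)) {y | |y 0| ≤ 1} := h ▸ rfl
  rw [h2, vol_pi1]

lemma p1_image : p1 '' Bbody = D2 := by
  rw [Bbody_eq_S3]
  ext y
  constructor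
  · rintro ⟨x, ⟨hx1, hx2⟩, rfl⟩
    show |x 1| + |x 2| ≤ 1
    exact hx2
  · intro hy
    have hy' : |y 0| + |y 1| ≤ 1 := hy
    have hy1 : |y 1| ≤ 1 := by have := abs_nonneg (y 0); linarith
    refine ⟨WithLp.toLp 2 (fun i => if i = 1 then y 0 else if i = 2 then y 1 else 0 :
      Fin 3 → ℝ), ⟨?_, ?_⟩, ?_⟩
    · show |(0:ℝ)| + |y 1| ≤ 1
      rw [abs_zero]; linarith
    · show |y 0| + |y 1| ≤ 1
      exact hy'
    · ext j
      fin_cases j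
      · show y 0 = y 0; rfl
      · show y 1 = y 1; rfl

lemma p2_image : p2 '' Bbody = D2 := by
  rw [Bbody_eq_S3]
  ext y
  constructor
  · rintro ⟨x, ⟨hx1, hx2⟩, rfl⟩
    show |x 0| + |x 2| ≤ 1
    exact hx1
  · intro hy
    have hy' : |y 0| + |y 1| ≤ 1 := hy
    have hy1 : |y 1| ≤ 1 := by have := abs_nonneg (y 0); linarith
    refine ⟨WithLp.toLp 2 (fun i => if i = 0 then y 0 else if i = 2 then y 1 else 0 :
      Fin 3 → ℝ), ⟨?_, ?_⟩, ?_⟩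
    · show |y 0| + |y 1| ≤ 1
      exact hy'
    · show |(0:ℝ)| + |y 1| ≤ 1
      rw [abs_zero]; linarith
    · ext j
      fin_cases j
      · show y 0 = y 0; rfl
      · show y 1 = y 1; rfl

lemma p12_image : p12 '' Bbody = I1 := by
  rw [Bbody_eq_S3]
  ext y
  constructor
  · rintro ⟨x, ⟨hx1, hx2⟩, rfl⟩
    show |x 2| ≤ 1
    have := abs_nonneg (x 0); linarith
  · intro hy
    have hy' : |y 0| ≤ 1 := hy
    refine ⟨WithLp.toLp 2 (fun i => if i = 2 then y 0 else 0 : Fin 3 → ℝ), ⟨?_, ?_⟩, ?_⟩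
    · show |(0:ℝ)| + |y 0| ≤ 1
      rw [abs_zero]; linarith
    · show |(0:ℝ)| + |y 0| ≤ 1
      rw [abs_zero]; linarith
    · ext j
      fin_cases j
      · show y 0 = y 0; rfl

end Aux

/-- For `B = conv([−1,1]²×{0} ∪ {±e₃}) ⊂ ℝ³`:
`vol₃(B) = 8/3`, `vol₂(p₁(B)) = vol₂(p₂(B)) = 2`, `vol₁(p₁₂(B)) = 2`, and consequently
`vol₃(B)·vol₁(p₁₂(B)) = 16/3 > 4 = vol₂(p₁(B))·vol₂(p₂(B))`: the 1-Rayleigh-type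
inequality `vol(B)·vol(p₁₂(B)) ≤ vol(p₁(B))·vol(p₂(B))` fails. -/
theorem statement9 :
    (volume Bbody).toReal = 8 / 3 ∧
    (volume (p1 '' Bbody)).toReal = 2 ∧
    (volume (p2 '' Bbody)).toReal = 2 ∧
    (volume (p12 '' Bbody)).toReal = 2 ∧
    (volume Bbody).toReal * (volume (p12 '' Bbody)).toReal >
      (volume (p1 '' Bbody)).toReal * (volume (p2 '' Bbody)).toReal := by
  have hB : (volume Bbody).toReal = 8 / 3 := by
    rw [Bbody_eq_S3, vol_S3, ENNReal.toReal_ofReal (by norm_num)]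
  have h1 : (volume (p1 '' Bbody)).toReal = 2 := by
    rw [p1_image, vol_D2, ENNReal.toReal_ofReal (by norm_num)]
  have h2 : (volume (p2 '' Bbody)).toReal = 2 := by
    rw [p2_image, vol_D2, ENNReal.toReal_ofReal (by norm_num)]
  have h12 : (volume (p12 '' Bbody)).toReal = 2 := by
    rw [p12_image, vol_I1, ENNReal.toReal_ofReal (by norm_num)]
  refine ⟨hB, h1, h2, h12, ?_⟩
  rw [hB, h1, h2, h12]
  norm_num

end ConvexPaper
end
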